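/- Weak diamond property of one-step evaluation: if t⃗ ≻ t⃗₁′ and t⃗ ≻ t⃗₂′, then one of the following holds: (i) t⃗₁′ ≡ t⃗₂′; (ii) t⃗₁′ ≻ t⃗₂′ or t⃗₂′ ≻ t⃗₁′; (iii) there exists a term distribution t⃗″ with t⃗₁′ ≻ t⃗″ and t⃗₂′ ≻ t⃗″. -/

import Mathlib

namespace LinAlg

/-! ### Syntax: pure values, pure terms, term distributions -/

mutual
inductive Val : Type where
  | var : ℕ → Val
  | lam : ℕ → Distr → Val
  | star : Val
  | pair : Val → Val → Val
  | inl : Val → Val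
  | inr : Val → Val
inductive Term : Type where
  | val : Val → Term
  | app : Term → Term → Term
  | seq : Term → Distr → Term
  | letp : ℕ → ℕ → Term → Distr → Term
  | matc : Term → ℕ → Distr → ℕ → Distr → Term
inductive Distr : Type where
  | zero : Distr
  | single : Term → Distr
  | add : Distr → Distr → Distr
  | smul : ℂ → Distr → Distr
end

noncomputable instance : DecidableEq Val := fun _ _ => Classical.dec _
noncomputable instance : DecidableEq Term := fun _ _ => Classical.dec _
noncomputable instance : DecidableEq Distr := fun _ _ => Classical.dec _

/-! ### The shallow congruence ≡ on term distributions -/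

inductive Cong : Distr → Distr → Prop where
  | addZero (d : Distr) : Cong (d.add .zero) d
  | oneSmul (d : Distr) : Cong (Distr.smul 1 d) d
  | smulSmul (a b : ℂ) (d : Distr) : Cong (Distr.smul a (Distr.smul b d)) (Distr.smul (a * b) d)
  | addComm (d₁ d₂ : Distr) : Cong (d₁.add d₂) (d₂.add d₁)
  | addAssoc (d₁ d₂ d₃ : Distr) : Cong ((d₁.add d₂).add d₃) (d₁.add (d₂.add d₃))
  | smulDistrib (a b : ℂ) (d : Distr) : Cong (Distr.smul (a + b) d) ((Distr.smul a d).add (Distr.smul b d))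
  | smulAdd (a : ℂ) (d₁ d₂ : Distr) : Cong (Distr.smul a (d₁.add d₂)) ((Distr.smul a d₁).add (Distr.smul a d₂))
  | refl (d : Distr) : Cong d d
  | symm {d₁ d₂ : Distr} : Cong d₁ d₂ → Cong d₂ d₁
  | trans {d₁ d₂ d₃ : Distr} : Cong d₁ d₂ → Cong d₂ d₃ → Cong d₁ d₃
  | addCongr {d₁ d₁' d₂ d₂' : Distr} : Cong d₁ d₁' → Cong d₂ d₂' → Cong (d₁.add d₂) (d₁'.add d₂')
  | smulCongr (a : ℂ) {d d' : Distr} : Cong d d' → Cong (Distr.smul a d) (Distr.smul a d')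

/-! ### Free variables -/

mutual
def fvV : Val → Finset ℕ
  | .var y => {y}
  | .lam y b => fvD b \ {y}
  | .star => ∅
  | .pair v₁ v₂ => fvV v₁ ∪ fvV v₂
  | .inl v => fvV v
  | .inr v => fvV v
def fvT : Term → Finset ℕ
  | .val v => fvV v
  | .app s t => fvT s ∪ fvT t
  | .seq t s => fvT t ∪ fvD s
  | .letp y z t s => fvT t ∪ (fvD s \ {y, z})
  | .matc t y s₁ z s₂ => fvT t ∪ (fvD s₁ \ {y}) ∪ (fvD s₂ \ {z})
def fvD : Distr → Finset ℕ
  | .zero => ∅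
  | .single t => fvT t
  | .add d₁ d₂ => fvD d₁ ∪ fvD d₂
  | .smul _ d => fvD d
end

/-! ### Pure substitution -/

mutual
def substV (x : ℕ) (w : Val) : Val → Val
  | .var y => if y = x then w else .var y
  | .lam y b => if y = x then .lam y b else .lam y (substD x w b)
  | .star => .star
  | .pair v₁ v₂ => .pair (substV x w v₁) (substV x w v₂)
  | .inl v => .inl (substV x w v)
  | .inr v => .inr (substV x w v)
def substT (x : ℕ) (w : Val) : Term → Term
  | .val v => .val (substV x w v)
  | .app s t => .app (substT x w s) (substT x w t)
  | .seq t s => .seq (substT x w t) (substD x w s)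
  | .letp y z t s =>
      .letp y z (substT x w t) (if y = x ∨ z = x then s else substD x w s)
  | .matc t y s₁ z s₂ =>
      .matc (substT x w t) y (if y = x then s₁ else substD x w s₁)
        z (if z = x then s₂ else substD x w s₂)
def substD (x : ℕ) (w : Val) : Distr → Distr
  | .zero => .zero
  | .single t => .single (substT x w t)
  | .add d₁ d₂ => .add (substD x w d₁) (substD x w d₂)
  | .smul a d => .smul a (substD x w d)
end

/-! ### Linear extensions of the syntactic constructs -/

def appTD (s : Term) : Distr → Distr
  | .zero => .zero
  | .single t => .single (.app s t)
  | .add d₁ d₂ => .add (appTD s d₁) (appTD s d₂)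
  | .smul a d => .smul a (appTD s d)

def appDV : Distr → Val → Distr
  | .zero, _ => .zero
  | .single t, v => .single (.app t (.val v))
  | .add d₁ d₂, v => .add (appDV d₁ v) (appDV d₂ v)
  | .smul a d, v => .smul a (appDV d v)

def seqD : Distr → Distr → Distr
  | .zero, _ => .zero
  | .single t, s => .single (.seq t s)
  | .add d₁ d₂, s => .add (seqD d₁ s) (seqD d₂ s)
  | .smul a d, s => .smul a (seqD d s)

def letpD (x y : ℕ) : Distr → Distr → Distr
  | .zero, _ => .zero
  | .single t, s => .single (.letp x y t s)
  | .add d₁ d₂, s => .add (letpD x y d₁ s) (letpD x y d₂ s)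
  | .smul a d, s => .smul a (letpD x y d s)

def matcD : Distr → ℕ → Distr → ℕ → Distr → Distr
  | .zero, _, _, _, _ => .zero
  | .single t, y, s₁, z, s₂ => .single (.matc t y s₁ z s₂)
  | .add d₁ d₂, y, s₁, z, s₂ => .add (matcD d₁ y s₁ z s₂) (matcD d₂ y s₁ z s₂)
  | .smul a d, y, s₁, z, s₂ => .smul a (matcD d y s₁ z s₂)

/-- Bilinear application of distributions:  (Σᵢ αᵢ·tᵢ)(Σⱼ βⱼ·sⱼ) = Σᵢⱼ αᵢβⱼ·(tᵢ sⱼ). -/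
def appD : Distr → Distr → Distr
  | .zero, _ => .zero
  | .single t, w => appTD t w
  | .add d₁ d₂, w => .add (appD d₁ w) (appD d₂ w)
  | .smul a d, w => .smul a (appD d w)

/-- Bilinear substitution  d⟨x := w⃗⟩ = Σⱼ βⱼ · d[x := wⱼ]  (recursion on the value
distribution w⃗; non-value summands are junk and are sent to 0⃗). -/
def bsubst (x : ℕ) (d : Distr) : Distr → Distr
  | .zero => .zero
  | .single (.val w) => substD x w d
  | .single _ => .zero
  | .add w₁ w₂ => .add (bsubst x d w₁) (bsubst x d w₂)
  | .smul a w => .smul a (bsubst x d w)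

/-! ### Evaluation -/

inductive Atom : Term → Distr → Prop where
  | beta (x : ℕ) (b : Distr) (v : Val) :
      Atom (.app (.val (.lam x b)) (.val v)) (substD x v b)
  | seqStar (s : Distr) : Atom (.seq (.val .star) s) s
  | letPair (x y : ℕ) (v w : Val) (s : Distr) :
      Atom (.letp x y (.val (.pair v w)) s) (substD y w (substD x v s))
  | matchInl (v : Val) (y : ℕ) (s₁ : Distr) (z : ℕ) (s₂ : Distr) :
      Atom (.matc (.val (.inl v)) y s₁ z s₂) (substD y v s₁)
  | matchInr (v : Val) (y : ℕ) (s₁ : Distr) (z : ℕ) (s₂ : Distr) :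
      Atom (.matc (.val (.inr v)) y s₁ z s₂) (substD z v s₂)
  | appR (s : Term) {t : Term} {d : Distr} : Atom t d → Atom (.app s t) (appTD s d)
  | appL (v : Val) {t : Term} {d : Distr} : Atom t d → Atom (.app t (.val v)) (appDV d v)
  | seqC (s : Distr) {t : Term} {d : Distr} : Atom t d → Atom (.seq t s) (seqD d s)
  | letC (x y : ℕ) (s : Distr) {t : Term} {d : Distr} :
      Atom t d → Atom (.letp x y t s) (letpD x y d s)
  | matcC (y : ℕ) (s₁ : Distr) (z : ℕ) (s₂ : Distr) {t : Term} {d : Distr} :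
      Atom t d → Atom (.matc t y s₁ z s₂) (matcD d y s₁ z s₂)

/-- One-step evaluation:  t⃗ ≻ t⃗′. -/
def Step (d d' : Distr) : Prop :=
  ∃ (a : ℂ) (s : Term) (s' r : Distr),
    Cong d (Distr.add (.smul a (.single s)) r) ∧
    Cong d' (Distr.add (.smul a s') r) ∧ Atom s s'

/-- Evaluation  t⃗ ≻≻ t⃗′:  reflexive-transitive closure of one-step evaluation. -/
def Eval : Distr → Distr → Prop := Relation.ReflTransGen Step

/-! ### Value distributions, inner product, norm -/

def IsValT : Term → Prop
  | .val _ => True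
  | _ => False

def IsValD : Distr → Prop
  | .zero => True
  | .single t => IsValT t
  | .add d₁ d₂ => IsValD d₁ ∧ IsValD d₂
  | .smul _ d => IsValD d

/-- The set of closed value distributions. -/
def ClosedValD : Set Distr := {d | IsValD d ∧ fvD d = ∅}

/-- Total coefficient of the pure term `t` in the distribution `d`. -/
noncomputable def coeff : Distr → Term → ℂ
  | .zero, _ => 0
  | .single s, t => if s = t then 1 else 0
  | .add d₁ d₂, t => coeff d₁ t + coeff d₂ t
  | .smul a d, t => a * coeff d t

/-- The domain of a distribution (all pure terms occurring in it, even with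
coefficient 0). -/
noncomputable def domD : Distr → Finset Term
  | .zero => ∅
  | .single t => {t}
  | .add d₁ d₂ => domD d₁ ∪ domD d₂
  | .smul _ d => domD d

/-- The inner product ⟨v⃗|w⃗⟩ on value distributions. -/
noncomputable def innerD (v w : Distr) : ℂ :=
  ∑ t ∈ domD v, (starRingEnd ℂ) (coeff v t) * coeff w t

/-- The pseudo-ℓ²-norm ‖v⃗‖. -/
noncomputable def normD (v : Distr) : ℝ := Real.sqrt (innerD v v).re

/-- The unit sphere S of closed value distributions of norm 1. -/
def Sphere : Set Distr := {d | d ∈ ClosedValD ∧ normD d = 1}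

/-- Span(X): weak linear combinations of elements of X (taken modulo ≡). -/
inductive Span (X : Set Distr) : Distr → Prop where
  | mem {d : Distr} : d ∈ X → Span X d
  | zero : Span X .zero
  | add {d₁ d₂ : Distr} : Span X d₁ → Span X d₂ → Span X (d₁.add d₂)
  | smul (a : ℂ) {d : Distr} : Span X d → Span X (Distr.smul a d)
  | congr {d d' : Distr} : Span X d → Cong d d' → Span X d'

/-! ### Realizability: unitary types -/

/-- t⃗ ⊩ A :  t⃗ evaluates to some vector of ⟦A⟧. -/
def Realizes (A : Set Distr) (t : Distr) : Prop := ∃ v ∈ A, Eval t v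

/-- |A| : the set of (closed) realizers of A. -/
def realizersOf (A : Set Distr) : Set Distr := {t | fvD t = ∅ ∧ Realizes A t}

/-! ### Type constructors -/

def UnitT : Set Distr := {Distr.single (.val .star)}

/-- ♭A : the basis of A. -/
def flatT (X : Set Distr) : Set Distr :=
  {e | ∃ d ∈ X, ∃ v : Val, (Term.val v) ∈ domD d ∧ e = Distr.single (.val v)}

/-- ♯A : the unitary span of A. -/
def sharpT (X : Set Distr) : Set Distr := {d | Span X d ∧ d ∈ Sphere}

/-- Linear extension of a value constructor. -/
def mapVD (f : Val → Val) : Distr → Distr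
  | .zero => .zero
  | .single (.val v) => .single (.val (f v))
  | .single t => .single t
  | .add d₁ d₂ => .add (mapVD f d₁) (mapVD f d₂)
  | .smul a d => .smul a (mapVD f d)

def inlD : Distr → Distr := mapVD Val.inl
def inrD : Distr → Distr := mapVD Val.inr

/-- Bilinear extension of pairing. -/
def pairD : Distr → Distr → Distr
  | .zero, _ => .zero
  | .single (.val v), w => mapVD (Val.pair v) w
  | .single t, _ => .single t
  | .add d₁ d₂, w => .add (pairD d₁ w) (pairD d₂ w)
  | .smul a d, w => .smul a (pairD d w)

/-- A + B (simple sum). -/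
def plusT (A B : Set Distr) : Set Distr :=
  {d | (∃ v ∈ A, d = inlD v) ∨ (∃ w ∈ B, d = inrD w)}

/-- A × B (simple product). -/
def timesT (A B : Set Distr) : Set Distr :=
  {d | ∃ v ∈ A, ∃ w ∈ B, d = pairD v w}

/-- A → B (pure arrow). -/
def arrowT (A B : Set Distr) : Set Distr :=
  {d | ∃ (x : ℕ) (b : Distr), d = Distr.single (.val (.lam x b)) ∧ fvD d = ∅ ∧
      ∀ v ∈ A, Realizes B (bsubst x b v)}

/-- Σᵢ αᵢ · λx.t⃗ᵢ  ↦  Σᵢ αᵢ · t⃗ᵢ  (strips the λx in front of each summand). -/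
def stripLam (x : ℕ) : Distr → Distr
  | .zero => .zero
  | .single (.val (.lam y b)) => if y = x then b else .single (.val (.lam y b))
  | .single t => .single t
  | .add d₁ d₂ => .add (stripLam x d₁) (stripLam x d₂)
  | .smul a d => .smul a (stripLam x d)

/-- A ⇒ B (unitary arrow). -/
def uarrowT (A B : Set Distr) : Set Distr :=
  {d | d ∈ Sphere ∧ ∃ x : ℕ,
      (∀ t ∈ domD d, ∃ b : Distr, t = Term.val (.lam x b)) ∧
      ∀ v ∈ A, Realizes B (bsubst x (stripLam x d) v)}

/-! ### Booleans -/

def ttD : Distr := .single (.val (.inl .star))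
def ffD : Distr := .single (.val (.inr .star))

/-- 𝔹 = 𝕌 + 𝕌. -/
def BoolT : Set Distr := plusT UnitT UnitT

/-- ♯𝔹, the type of unitary Booleans. -/
def sharpBool : Set Distr := sharpT BoolT

/-- Boolean projection π : Span({tt,ff}) → ℂ². -/
noncomputable def piB (d : Distr) : ℂ × ℂ :=
  (coeff d (.val (.inl .star)), coeff d (.val (.inr .star)))

/-- t⃗ represents the operator F : ℂ² → ℂ². -/
def Represents (td : Distr) (F : ℂ × ℂ → ℂ × ℂ) : Prop :=
  ∀ v, Span BoolT v → ∃ w, Span BoolT w ∧ Eval (appD td v) w ∧ piB w = F (piB v)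

/-- Hermitian inner product on ℂ². -/
def hinner (u v : ℂ × ℂ) : ℂ :=
  (starRingEnd ℂ) u.1 * v.1 + (starRingEnd ℂ) u.2 * v.2

/-- A unitary operator on ℂ². -/
def IsUnitaryOp (F : ℂ × ℂ → ℂ × ℂ) : Prop :=
  ∀ u v : ℂ × ℂ, hinner (F u) (F v) = hinner u v

/-! ### Typing contexts, substitutions, judgments -/

abbrev Ctx := List (ℕ × Set Distr)
abbrev Subst := List (ℕ × Distr)

/-- Applying a substitution, one bilinear substitution at a time. -/
def applySub : Distr → Subst → Distr
  | d, [] => d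
  | d, (x, w) :: σ => applySub (bsubst x d w) σ

/-- σ ∈ ⟦Γ⟧. -/
def SubMem (σ : Subst) (Γ : Ctx) : Prop :=
  List.Forall₂ (fun p q => p.1 = q.1 ∧ p.2 ∈ q.2) σ Γ

def ctxDom (Γ : Ctx) : Set ℕ := {x | ∃ A, (x, A) ∈ Γ}

/-- dom♯(Γ): the variables of Γ whose type is not a pure-value type. -/
def ctxDomSharp (Γ : Ctx) : Set ℕ := {x | ∃ A, (x, A) ∈ Γ ∧ flatT A ≠ A}

/-- All the types of the context are unitary types (subsets of the sphere). -/
def CtxUnitary (Γ : Ctx) : Prop := ∀ p ∈ Γ, p.2 ⊆ Sphere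

/-- Validity of the typing judgment  Γ ⊢ t⃗ : A. -/
def ValidJ (Γ : Ctx) (t : Distr) (A : Set Distr) : Prop :=
  ctxDomSharp Γ ⊆ (fvD t : Set ℕ) ∧ (fvD t : Set ℕ) ⊆ ctxDom Γ ∧
  ∀ σ : Subst, SubMem σ Γ → Realizes A (applySub t σ)

/-- Validity of the orthogonality judgment  Γ | Δ₁ ⊢ t⃗₁ ⊥ Δ₂ ⊢ t⃗₂ : A. -/
def OrthoJ (Γ Δ₁ Δ₂ : Ctx) (t₁ t₂ : Distr) (A : Set Distr) : Prop :=
  ValidJ (Γ ++ Δ₁) t₁ A ∧ ValidJ (Γ ++ Δ₂) t₂ A ∧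
  ∀ σ σ₁ σ₂ : Subst, SubMem σ Γ → SubMem σ₁ Δ₁ → SubMem σ₂ Δ₂ →
    ∀ v₁ v₂ : Distr, v₁ ∈ ClosedValD → v₂ ∈ ClosedValD →
      Eval (applySub t₁ (σ ++ σ₁)) v₁ → Eval (applySub t₂ (σ ++ σ₂)) v₂ →
      innerD v₁ v₂ = 0

end LinAlg

namespace LinAlg


/-! ### Auxiliary development for the weak diamond property -/

section WeakDiamond

/-- Coefficients are invariant under the congruence. -/
theorem coeff_cong {d e : Distr} (h : Cong d e) : ∀ t, coeff d t = coeff e t := by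
  induction h with
  | addZero d => intro t; simp [coeff]
  | oneSmul d => intro t; simp [coeff]
  | smulSmul a b d => intro t; simp [coeff]; ring
  | addComm d₁ d₂ => intro t; simp [coeff]; ring
  | addAssoc d₁ d₂ d₃ => intro t; simp [coeff]; ring
  | smulDistrib a b d => intro t; simp [coeff]; ring
  | smulAdd a d₁ d₂ => intro t; simp [coeff]; ring
  | refl d => intro t; rfl
  | symm _ ih => intro t; exact (ih t).symm
  | trans _ _ ih1 ih2 => intro t; exact (ih1 t).trans (ih2 t)
  | addCongr _ _ ih1 ih2 => intro t; simp [coeff, ih1 t, ih2 t]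
  | smulCongr a _ ih => intro t; simp [coeff, ih t]

/-- Domains are invariant under the congruence. -/
theorem domD_cong {d e : Distr} (h : Cong d e) : domD d = domD e := by
  induction h with
  | addZero d => simp [domD]
  | oneSmul d => simp [domD]
  | smulSmul a b d => simp [domD]
  | addComm d₁ d₂ => simp [domD, Finset.union_comm]
  | addAssoc d₁ d₂ d₃ => simp [domD, Finset.union_assoc]
  | smulDistrib a b d => simp [domD]
  | smulAdd a d₁ d₂ => simp [domD]
  | refl d => rfl
  | symm _ ih => exact ih.symm
  | trans _ _ ih1 ih2 => exact ih1.trans ih2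
  | addCongr _ _ ih1 ih2 => simp [domD, ih1, ih2]
  | smulCongr a _ ih => simp [domD, ih]

theorem coeff_of_not_mem : ∀ (d : Distr) (t : Term), t ∉ domD d → coeff d t = 0
  | .zero, t, _ => by simp [coeff]
  | .single s, t, h => by
      simp only [domD, Finset.mem_singleton] at h
      simp only [coeff, if_neg (fun h' : s = t => h h'.symm)]
  | .add d₁ d₂, t, h => by
      simp only [domD, Finset.mem_union, not_or] at h
      simp only [coeff, coeff_of_not_mem d₁ t h.1, coeff_of_not_mem d₂ t h.2, add_zero]
  | .smul a d, t, h => by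
      simp only [domD] at h
      simp only [coeff, coeff_of_not_mem d t h, mul_zero]

/-- Canonical linear combination along a list of pure terms. -/
noncomputable def canonL (f : Term → ℂ) : List Term → Distr
  | [] => .zero
  | t :: l => .add (.smul (f t) (.single t)) (canonL f l)

theorem coeff_canonL (f : Term → ℂ) :
    ∀ (l : List Term), l.Nodup → ∀ t, coeff (canonL f l) t = if t ∈ l then f t else 0
  | [], _, t => by simp [canonL, coeff]
  | s :: l, h, t => by
      simp only [List.nodup_cons] at h
      by_cases hts : t = s
      · subst hts
        simp [canonL, coeff, coeff_canonL f l h.2 t, h.1]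
      · simp only [canonL, coeff, coeff_canonL f l h.2 t,
          if_neg (fun h' : s = t => hts h'.symm), List.mem_cons, mul_zero, zero_add]
        simp [hts]

theorem domD_canonL (f : Term → ℂ) : ∀ (l : List Term), domD (canonL f l) = l.toFinset
  | [] => by simp [canonL, domD]
  | t :: l => by
      simp only [canonL, domD, domD_canonL f l, List.toFinset_cons]
      ext x; simp

theorem canonL_congr {f g : Term → ℂ} :
    ∀ {l : List Term}, (∀ t ∈ l, f t = g t) → canonL f l = canonL g l
  | [], _ => rfl
  | t :: l, h => by
      simp only [canonL]
      rw [h t (by simp), canonL_congr (fun x hx => h x (by simp [hx]))]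


theorem cong_shuffle (x y z : Distr) : Cong (x.add (y.add z)) (y.add (x.add z)) :=
  ((Cong.addAssoc x y z).symm.trans ((Cong.addComm x y).addCongr (Cong.refl z))).trans
    (Cong.addAssoc y x z)

theorem canonL_perm (f : Term → ℂ) {l l' : List Term} (h : l.Perm l') :
    Cong (canonL f l) (canonL f l') := by
  induction h with
  | nil => exact .refl _
  | cons x _ ih => exact (Cong.refl _).addCongr ih
  | swap x y l => exact cong_shuffle _ _ _
  | trans _ _ ih1 ih2 => exact ih1.trans ih2

theorem smul_zero_dec (α : ℂ) : Cong (Distr.smul α .zero) (Distr.smul (α - 1) .zero) := by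
  have h0 : Distr.smul α Distr.zero = Distr.smul ((α - 1) + 1) .zero := by norm_num
  rw [h0]
  refine (Cong.smulDistrib _ _ _).trans ?_
  refine (((Cong.refl _).addCongr (Cong.oneSmul _)).trans (Cong.addZero _))

theorem smul_zero_cong (a : ℂ) : Cong (Distr.smul a .zero) .zero := by
  by_cases ha : a = 1
  · subst ha; exact Cong.oneSmul _
  · have hγ : a - 1 ≠ 0 := sub_ne_zero.mpr ha
    have h1 : (a - 1) * (a / (a - 1)) = a := by field_simp
    have h2 : (a - 1) * (a / (a - 1) - 1) = 1 := by field_simp; ring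
    have c1 : Cong (Distr.smul a .zero)
        (Distr.smul (a - 1) (Distr.smul (a / (a - 1)) .zero)) := by
      have := (Cong.smulSmul (a - 1) (a / (a - 1)) Distr.zero).symm
      rwa [h1] at this
    have c2 := (smul_zero_dec (a / (a - 1))).smulCongr (a - 1)
    have c3 : Cong (Distr.smul (a - 1) (Distr.smul (a / (a - 1) - 1) .zero))
        (Distr.smul ((a - 1) * (a / (a - 1) - 1)) .zero) := Cong.smulSmul _ _ _
    have c4 : Cong (Distr.smul ((a - 1) * (a / (a - 1) - 1)) .zero) .zero := by
      rw [h2]; exact Cong.oneSmul _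
    exact ((c1.trans c2).trans c3).trans c4

theorem smul_canonL (a : ℂ) (f : Term → ℂ) :
    ∀ (l : List Term), Cong (Distr.smul a (canonL f l)) (canonL (fun t => a * f t) l)
  | [] => smul_zero_cong a
  | t :: l => by
      refine (Cong.smulAdd a _ _).trans ?_
      exact (Cong.smulSmul a (f t) (.single t)).addCongr (smul_canonL a f l)

theorem canonL_insert (c : ℂ) (t : Term) :
    ∀ (l : List Term), l.Nodup → ∀ f : Term → ℂ,
      ∃ l' : List Term, l'.Nodup ∧ l'.toFinset = insert t l.toFinset ∧
        Cong ((Distr.smul c (.single t)).add (canonL f l))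
          (canonL (fun x => (if x = t then c else 0) + (if x ∈ l then f x else 0)) l')
  | [], _, f => by
      refine ⟨[t], by simp, by simp, ?_⟩
      have : (fun x => (if x = t then c else 0) + (if x ∈ ([] : List Term) then f x else 0)) t
          = c := by simp
      show Cong ((Distr.smul c (.single t)).add .zero)
        ((Distr.smul _ (.single t)).add (canonL _ []))
      rw [this]
      exact .refl _
  | s :: l, h, f => by
      simp only [List.nodup_cons] at h
      by_cases hts : t = s
      · subst hts
        refine ⟨t :: l, by simp [h], by simp, ?_⟩
        have e1 : Cong ((Distr.smul c (.single t)).add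
            ((Distr.smul (f t) (.single t)).add (canonL f l)))
            (((Distr.smul c (.single t)).add (Distr.smul (f t) (.single t))).add (canonL f l)) :=
          (Cong.addAssoc _ _ _).symm
        have e2 : Cong (((Distr.smul c (.single t)).add (Distr.smul (f t) (.single t))).add
            (canonL f l))
            ((Distr.smul (c + f t) (.single t)).add (canonL f l)) :=
          (Cong.smulDistrib c (f t) (.single t)).symm.addCongr (Cong.refl _)
        refine (e1.trans e2).trans ?_
        show Cong _ ((Distr.smul _ (.single t)).add (canonL _ l))
        have hft : (fun x => (if x = t then c else 0) + (if x ∈ t :: l then f x else 0)) t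
            = c + f t := by simp
        have htail : canonL (fun x => (if x = t then c else 0) +
            (if x ∈ t :: l then f x else 0)) l = canonL f l := by
          apply canonL_congr
          intro x hx
          have hxt : x ≠ t := fun hh => h.1 (hh ▸ hx)
          simp [hxt, hx]
        rw [hft, htail]
        exact .refl _
      · obtain ⟨l'', hnd, hfs, hc⟩ := canonL_insert c t l h.2 f
        refine ⟨s :: l'', ?_, ?_, ?_⟩
        · simp only [List.nodup_cons]
          refine ⟨?_, hnd⟩
          intro hs
          have : s ∈ insert t l.toFinset := by rw [← hfs]; simpa using hs
          simp only [Finset.mem_insert, List.mem_toFinset] at this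
          rcases this with h' | h'
          · exact hts h'.symm
          · exact h.1 h'
        · simp only [List.toFinset_cons, hfs]
          ext x; simp; tauto
        · show Cong ((Distr.smul c (.single t)).add
            ((Distr.smul (f s) (.single s)).add (canonL f l))) _
          refine (cong_shuffle _ _ _).trans ?_
          show Cong _ ((Distr.smul _ (.single s)).add (canonL _ l''))
          have hfs' : (fun x => (if x = t then c else 0) + (if x ∈ s :: l then f x else 0)) s
              = f s := by
            show (if s = t then c else 0) + (if s ∈ s :: l then f s else 0) = f s
            rw [if_neg (fun hh : s = t => hts hh.symm), if_pos List.mem_cons_self, zero_add]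
          have htail : canonL (fun x => (if x = t then c else 0) +
              (if x ∈ s :: l then f x else 0)) l''
              = canonL (fun x => (if x = t then c else 0) + (if x ∈ l then f x else 0)) l'' := by
            apply canonL_congr
            intro x hx
            have hxs : x ≠ s := fun hh => by
              have : x ∈ insert t l.toFinset := by rw [← hfs]; simpa using hx
              simp only [Finset.mem_insert, List.mem_toFinset] at this
              rcases this with h' | h'
              · exact hts (hh ▸ h').symm
              · exact h.1 (hh ▸ h')
            simp [hxs]
          rw [hfs', htail]
          exact (Cong.refl _).addCongr hc


theorem canonL_merge :
    ∀ (l₂ : List Term), l₂.Nodup → ∀ (l₁ : List Term), l₁.Nodup → ∀ f g : Term → ℂ,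
      ∃ l : List Term, l.Nodup ∧ l.toFinset = l₁.toFinset ∪ l₂.toFinset ∧
        Cong ((canonL f l₁).add (canonL g l₂))
          (canonL (fun x => (if x ∈ l₁ then f x else 0) + (if x ∈ l₂ then g x else 0)) l)
  | [], _, l₁, h₁, f, g => by
      refine ⟨l₁, h₁, by simp, ?_⟩
      refine (Cong.addZero _).trans ?_
      have : canonL f l₁ = canonL
          (fun x => (if x ∈ l₁ then f x else 0) + (if x ∈ ([] : List Term) then g x else 0))
          l₁ := canonL_congr (fun x hx => by simp [hx])
      rw [← this]
      exact .refl _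
  | u :: l₂', h₂, l₁, h₁, f, g => by
      simp only [List.nodup_cons] at h₂
      -- LHS = C₁ + ((g u)·u + C₂')
      obtain ⟨l₁', hnd₁, hfs₁, hins⟩ := canonL_insert (g u) u l₁ h₁ f
      obtain ⟨l, hnd, hfs, hmerge⟩ := canonL_merge l₂' h₂.2 l₁' hnd₁
        (fun x => (if x = u then g u else 0) + (if x ∈ l₁ then f x else 0)) g
      refine ⟨l, hnd, ?_, ?_⟩
      · rw [hfs, hfs₁]
        ext x; simp
      · show Cong ((canonL f l₁).add ((Distr.smul (g u) (.single u)).add (canonL g l₂'))) _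
        refine ((Cong.addAssoc _ _ _).symm.trans ?_)
        refine (((Cong.addComm _ _).addCongr (Cong.refl _)).trans ?_)
        refine (hins.addCongr (Cong.refl _)).trans ?_
        refine hmerge.trans ?_
        have heq : canonL (fun x =>
            (if x ∈ l₁' then ((if x = u then g u else 0) + (if x ∈ l₁ then f x else 0)) else 0)
            + (if x ∈ l₂' then g x else 0)) l
            = canonL (fun x => (if x ∈ l₁ then f x else 0) +
                (if x ∈ u :: l₂' then g x else 0)) l := by
          apply canonL_congr
          intro x hx
          have hxl : x ∈ l₁'.toFinset ∪ l₂'.toFinset := by rw [← hfs]; simpa using hx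
          have hmem₁ : x ∈ l₁' ↔ (x = u ∨ x ∈ l₁) := by
            rw [← List.mem_toFinset, hfs₁]; simp
          by_cases hxu : x = u
          · subst hxu
            have hu₁ : x ∈ l₁' := hmem₁.mpr (Or.inl rfl)
            simp [hu₁, h₂.1, add_comm]
          · by_cases hx₁ : x ∈ l₁
            · have hx₁' : x ∈ l₁' := hmem₁.mpr (Or.inr hx₁)
              simp [hx₁', hxu, hx₁]
            · have hx₁' : x ∉ l₁' := fun hh => by
                rcases hmem₁.mp hh with h' | h'
                · exact hxu h'
                · exact hx₁ h'
              simp [hx₁', hxu, hx₁]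
        rw [heq]
        exact .refl _

/-- Every distribution is congruent to its canonical form. -/
theorem cong_canon : ∀ d : Distr, Cong d (canonL (coeff d) (domD d).toList)
  | .zero => by
      show Cong Distr.zero (canonL _ (∅ : Finset Term).toList)
      rw [Finset.toList_empty]
      exact .refl _
  | .single t => by
      show Cong (Distr.single t) (canonL _ ({t} : Finset Term).toList)
      rw [Finset.toList_singleton]
      show Cong (Distr.single t)
        ((Distr.smul (if t = t then 1 else 0) (.single t)).add .zero)
      rw [if_pos rfl]
      exact ((Cong.addZero _).trans (Cong.oneSmul _)).symm
  | .add d₁ d₂ => by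
      have ih₁ := cong_canon d₁
      have ih₂ := cong_canon d₂
      obtain ⟨l, hnd, hfs, hmerge⟩ := canonL_merge (domD d₂).toList (Finset.nodup_toList _)
        (domD d₁).toList (Finset.nodup_toList _) (coeff d₁) (coeff d₂)
      refine ((ih₁.addCongr ih₂).trans hmerge).trans ?_
      have heq : canonL (fun x => (if x ∈ (domD d₁).toList then coeff d₁ x else 0) +
          (if x ∈ (domD d₂).toList then coeff d₂ x else 0)) l
          = canonL (coeff (d₁.add d₂)) l := by
        apply canonL_congr
        intro x _
        have e₁ : (if x ∈ (domD d₁).toList then coeff d₁ x else 0) = coeff d₁ x := by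
          by_cases h : x ∈ (domD d₁).toList
          · rw [if_pos h]
          · rw [if_neg h, coeff_of_not_mem d₁ x (fun hh => h (Finset.mem_toList.mpr hh))]
        have e₂ : (if x ∈ (domD d₂).toList then coeff d₂ x else 0) = coeff d₂ x := by
          by_cases h : x ∈ (domD d₂).toList
          · rw [if_pos h]
          · rw [if_neg h, coeff_of_not_mem d₂ x (fun hh => h (Finset.mem_toList.mpr hh))]
        rw [e₁, e₂]; rfl
      rw [heq]
      apply canonL_perm
      apply List.perm_of_nodup_nodup_toFinset_eq hnd (Finset.nodup_toList _)
      rw [hfs, Finset.toList_toFinset, Finset.toList_toFinset, Finset.toList_toFinset]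
      rfl
  | .smul a d => by
      have ih := cong_canon d
      refine (ih.smulCongr a).trans ?_
      refine (smul_canonL a (coeff d) ((domD d).toList)).trans ?_
      have heq : canonL (fun t => a * coeff d t) ((domD d).toList)
          = canonL (coeff (Distr.smul a d)) ((domD (Distr.smul a d)).toList) := by
        show canonL _ ((domD d).toList) = canonL _ ((domD d).toList)
        exact canonL_congr (fun x _ => rfl)
      rw [heq]
      exact .refl _

/-- Completeness: equal coefficients and equal domain imply congruence. -/
theorem cong_of_eq {d e : Distr} (hc : ∀ t, coeff d t = coeff e t)
    (hd : domD d = domD e) : Cong d e := by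
  refine (cong_canon d).trans ?_
  have : canonL (coeff d) (domD d).toList = canonL (coeff e) (domD e).toList := by
    rw [hd]
    exact canonL_congr (fun x _ => hc x)
  rw [this]
  exact (cong_canon e).symm


theorem no_atom_val {v : Val} {d : Distr} (h : Atom (.val v) d) : False := by
  cases h

/-- Atomic evaluation is deterministic. -/
theorem atom_det {s : Term} {d : Distr} (h : Atom s d) :
    ∀ {d' : Distr}, Atom s d' → d = d' := by
  induction h with
  | beta x b v => intro d' h'; cases h' with
    | beta => rfl
    | appR _ h => exact absurd h no_atom_val
    | appL _ h => exact absurd h no_atom_val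
  | seqStar s => intro d' h'; cases h' with
    | seqStar => rfl
    | seqC _ h => exact absurd h no_atom_val
  | letPair x y v w s => intro d' h'; cases h' with
    | letPair => rfl
    | letC _ _ _ h => exact absurd h no_atom_val
  | matchInl v y s₁ z s₂ => intro d' h'; cases h' with
    | matchInl => rfl
    | matcC _ _ _ _ h => exact absurd h no_atom_val
  | matchInr v y s₁ z s₂ => intro d' h'; cases h' with
    | matchInr => rfl
    | matcC _ _ _ _ h => exact absurd h no_atom_val
  | appR s h ih => intro d' h'; cases h' with
    | beta => exact absurd h no_atom_val
    | appR _ h2 => rw [ih h2]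
    | appL _ h2 => exact absurd h no_atom_val
  | appL v h ih => intro d' h'; cases h' with
    | beta => exact absurd h no_atom_val
    | appR _ h2 => exact absurd h2 no_atom_val
    | appL _ h2 => rw [ih h2]
  | seqC s h ih => intro d' h'; cases h' with
    | seqStar => exact absurd h no_atom_val
    | seqC _ h2 => rw [ih h2]
  | letC x y s h ih => intro d' h'; cases h' with
    | letPair => exact absurd h no_atom_val
    | letC _ _ _ h2 => rw [ih h2]
  | matcC y s₁ z s₂ h ih => intro d' h'; cases h' with
    | matchInl => exact absurd h no_atom_val
    | matchInr => exact absurd h no_atom_val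
    | matcC _ _ _ _ h2 => rw [ih h2]

/-- Characterization of one-step evaluation, forward direction. -/
theorem step_elim {d d' : Distr} (h : Step d d') :
    ∃ (a : ℂ) (s : Term) (s' : Distr) (Dr : Finset Term),
      Atom s s' ∧ s ∈ domD d ∧ domD d \ {s} ⊆ Dr ∧ Dr ⊆ domD d ∧
      (s ∈ Dr ∨ coeff d s = a) ∧
      (∀ t, coeff d' t = coeff d t + a * (coeff s' t - if s = t then 1 else 0)) ∧
      domD d' = domD s' ∪ Dr := by
  obtain ⟨a, s, s', r, hc1, hc2, hat⟩ := h
  have hco1 := coeff_cong hc1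
  have hdo1 := domD_cong hc1
  have hco2 := coeff_cong hc2
  have hdo2 := domD_cong hc2
  have hdome : domD d = {s} ∪ domD r := by
    rw [hdo1]; simp [domD]
  have hcoe : ∀ t, coeff d t = a * (if s = t then 1 else 0) + coeff r t := by
    intro t; rw [hco1 t]; simp [coeff]
  refine ⟨a, s, s', domD r, hat, ?_, ?_, ?_, ?_, ?_, ?_⟩
  · rw [hdome]; simp
  · rw [hdome]; intro x hx; simp at hx; tauto
  · rw [hdome]; intro x hx; simp [hx]
  · by_cases hs : s ∈ domD r
    · exact Or.inl hs
    · refine Or.inr ?_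
      rw [hcoe s, coeff_of_not_mem r s hs, if_pos rfl]; ring
  · intro t
    rw [hco2 t, hcoe t]
    simp only [coeff]
    ring
  · rw [hdo2]; simp [domD]

/-- Characterization of one-step evaluation, backward direction. -/
theorem step_intro {d d' : Distr} (a : ℂ) (s : Term) (s' : Distr) (Dr : Finset Term)
    (hat : Atom s s') (hs : s ∈ domD d)
    (h1 : domD d \ {s} ⊆ Dr) (h2 : Dr ⊆ domD d)
    (h3 : s ∈ Dr ∨ coeff d s = a)
    (h4 : ∀ t, coeff d' t = coeff d t + a * (coeff s' t - if s = t then 1 else 0))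
    (h5 : domD d' = domD s' ∪ Dr) : Step d d' := by
  classical
  set rf : Term → ℂ := fun t => coeff d t - a * (if s = t then 1 else 0) with hrf
  set r : Distr := canonL rf Dr.toList with hr
  have hrnd := Finset.nodup_toList Dr
  have hcor : ∀ t, coeff r t = if t ∈ Dr then rf t else 0 := by
    intro t
    rw [hr, coeff_canonL rf Dr.toList hrnd t]
    by_cases h : t ∈ Dr
    · rw [if_pos (Finset.mem_toList.mpr h), if_pos h]
    · rw [if_neg (fun hh => h (Finset.mem_toList.mp hh)), if_neg h]
  have hdor : domD r = Dr := by rw [hr, domD_canonL, Finset.toList_toFinset]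
  have hr0 : ∀ t, t ∉ Dr → coeff d t - a * (if s = t then 1 else 0) = 0 := by
    intro t ht
    by_cases hts : t = s
    · subst hts
      rcases h3 with h3 | h3
      · exact absurd h3 ht
      · rw [h3, if_pos rfl]; ring
    · have htd : t ∉ domD d := fun hh => ht (h1 (by simp [hh, hts]))
      rw [coeff_of_not_mem d t htd, if_neg (fun hh => hts hh.symm)]; ring
  refine ⟨a, s, s', r, ?_, ?_, hat⟩
  · apply cong_of_eq
    · intro t
      simp only [coeff, hcor t]
      by_cases h : t ∈ Dr
      · rw [if_pos h, hrf]; ring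
      · rw [if_neg h]
        have := hr0 t h
        linear_combination this
    · have hseq : {s} ∪ Dr = domD d := by
        apply Finset.Subset.antisymm
        · intro x hx
          rcases Finset.mem_union.mp hx with hx | hx
          · rw [Finset.mem_singleton] at hx; subst hx; exact hs
          · exact h2 hx
        · intro x hx
          by_cases hxs : x = s
          · exact Finset.mem_union.mpr (Or.inl (by simp [hxs]))
          · exact Finset.mem_union.mpr
              (Or.inr (h1 (Finset.mem_sdiff.mpr ⟨hx, by simp [hxs]⟩)))
      simp only [domD, hdor, hseq]
  · apply cong_of_eq
    · intro t
      simp only [coeff, hcor t]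
      rw [h4 t]
      by_cases h : t ∈ Dr
      · rw [if_pos h, hrf]; ring
      · rw [if_neg h]
        have := hr0 t h
        linear_combination this
    · simp only [domD, hdor, h5]


/-- Helper: two steps contracting the same redex `s`;
if `s` still occurs in the domain of the first result, it can step to the second. -/
theorem diamond_same {t t₁' t₂' : Distr} {a b : ℂ} {s : Term} {s' : Distr}
    {D₁ D₂ : Finset Term}
    (hat : Atom s s') (hsT : s ∈ domD t)
    (hD₁ : domD t \ {s} ⊆ D₁) (hD₁' : D₁ ⊆ domD t)
    (hD₂ : domD t \ {s} ⊆ D₂) (hD₂' : D₂ ⊆ domD t)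
    (h2alt : s ∈ D₂ ∨ coeff t s = b)
    (h1c : ∀ x, coeff t₁' x = coeff t x + a * (coeff s' x - if s = x then 1 else 0))
    (h1d : domD t₁' = domD s' ∪ D₁)
    (h2c : ∀ x, coeff t₂' x = coeff t x + b * (coeff s' x - if s = x then 1 else 0))
    (h2d : domD t₂' = domD s' ∪ D₂)
    (hmem : s ∈ domD t₁') : Step t₁' t₂' := by
  classical
  set S := domD s' with hS
  set T := domD t with hT
  by_cases hs2 : s ∈ domD t₂'
  -- Branch 1: s in the domain of t₂' as well.
  · refine step_intro (b - a) s s' (S ∪ T) hat hmem ?_ ?_ (Or.inl ?_) ?_ ?_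
    · intro x hx
      rw [h1d] at hx
      simp only [Finset.mem_sdiff, Finset.mem_union] at hx
      rcases hx.1 with h' | h'
      · exact Finset.mem_union.mpr (Or.inl h')
      · exact Finset.mem_union.mpr (Or.inr (hD₁' h'))
    · rw [h1d]
      intro x hx
      rcases Finset.mem_union.mp hx with h' | h'
      · exact Finset.mem_union.mpr (Or.inl h')
      · by_cases hxs : x = s
        · subst hxs; exact h1d ▸ hmem
        · exact Finset.mem_union.mpr (Or.inr (hD₁ (by simp [h', hxs])))
    · exact Finset.mem_union.mpr (Or.inr hsT)
    · intro x; rw [h1c x, h2c x]; ring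
    · rw [h2d]
      apply Finset.Subset.antisymm
      · intro x hx
        rcases Finset.mem_union.mp hx with h' | h'
        · exact Finset.mem_union.mpr (Or.inl h')
        · exact Finset.mem_union.mpr (Or.inr (Finset.mem_union.mpr (Or.inr (hD₂' h'))))
      · intro x hx
        rcases Finset.mem_union.mp hx with h' | h'
        · exact Finset.mem_union.mpr (Or.inl h')
        · rcases Finset.mem_union.mp h' with h'' | h''
          · exact Finset.mem_union.mpr (Or.inl h'')
          · by_cases hxs : x = s
            · subst hxs; rw [← h2d] at *; exact hs2
            · exact Finset.mem_union.mpr (Or.inr (hD₂ (by simp [h'', hxs])))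
  -- Branch 2: s not in the domain of t₂'.
  · rw [h2d] at hs2
    simp only [Finset.mem_union, not_or] at hs2
    have hsS : s ∉ S := hs2.1
    have hsD₂ : s ∉ D₂ := hs2.2
    have hftb : coeff t s = b := by
      rcases h2alt with h' | h'
      · exact absurd h' hsD₂
      · exact h'
    have hgs : coeff s' s = 0 := coeff_of_not_mem s' s hsS
    refine step_intro (b - a) s s' (S ∪ (T \ {s})) hat hmem ?_ ?_ (Or.inr ?_) ?_ ?_
    · intro x hx
      rw [h1d] at hx
      simp only [Finset.mem_sdiff, Finset.mem_union] at hx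
      rcases hx.1 with h' | h'
      · exact Finset.mem_union.mpr (Or.inl h')
      · exact Finset.mem_union.mpr (Or.inr (by simp [hD₁' h', hx.2]))
    · rw [h1d]
      intro x hx
      rcases Finset.mem_union.mp hx with h' | h'
      · exact Finset.mem_union.mpr (Or.inl h')
      · rw [Finset.mem_sdiff] at h'
        exact Finset.mem_union.mpr (Or.inr (hD₁ (by simp [h'.1, h'.2])))
    · rw [h1c s, hftb, hgs, if_pos rfl]; ring
    · intro x; rw [h1c x, h2c x]; ring
    · rw [h2d]
      have hD₂eq : D₂ = T \ {s} := by
        apply Finset.Subset.antisymm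
        · intro x hx
          refine Finset.mem_sdiff.mpr ⟨hD₂' hx, ?_⟩
          simp only [Finset.mem_singleton]
          intro hxs; subst hxs; exact hsD₂ hx
        · exact hD₂
      rw [hD₂eq, ← hS]
      ext x
      simp only [Finset.mem_union]
      tauto


/-- Helper: steps contracting distinct redexes can be joined. -/
theorem diamond_diff {t t₁' : Distr} {a b : ℂ} {s u : Term} {s' u' : Distr}
    {D₁ D₂ : Finset Term}
    (hsu : s ≠ u) (hat2 : Atom u u') (hu : u ∈ domD t)
    (hD₁ : domD t \ {s} ⊆ D₁)
    (hD₂' : D₂ ⊆ domD t)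
    (h2alt : u ∈ D₂ ∨ coeff t u = b)
    (h1c : ∀ x, coeff t₁' x = coeff t x + a * (coeff s' x - if s = x then 1 else 0))
    (h1d : domD t₁' = domD s' ∪ D₁) :
    Step t₁'
      (canonL
        (fun x => coeff t x + a * (coeff s' x - if s = x then 1 else 0)
          + b * (coeff u' x - if u = x then 1 else 0))
        ((domD s' ∪ domD u' ∪ ((domD s' ∪ D₁) \ {u} ∪ (domD u' ∪ D₂) \ {s})).toList)) := by
  classical
  set H : Term → ℂ := fun x => coeff t x + a * (coeff s' x - if s = x then 1 else 0)
    + b * (coeff u' x - if u = x then 1 else 0) with hH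
  set W : Finset Term :=
    domD s' ∪ domD u' ∪ ((domD s' ∪ D₁) \ {u} ∪ (domD u' ∪ D₂) \ {s}) with hW
  have hWnd := Finset.nodup_toList W
  have hcoW : ∀ x, coeff (canonL H W.toList) x = if x ∈ W then H x else 0 := by
    intro x
    rw [coeff_canonL H W.toList hWnd x]
    by_cases h : x ∈ W
    · rw [if_pos (Finset.mem_toList.mpr h), if_pos h]
    · rw [if_neg (fun hh => h (Finset.mem_toList.mp hh)), if_neg h]
  have hdoW : domD (canonL H W.toList) = W := by
    rw [domD_canonL, Finset.toList_toFinset]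
  have huT₁ : u ∈ domD t₁' := by
    rw [h1d]
    refine Finset.mem_union.mpr (Or.inr (hD₁ (Finset.mem_sdiff.mpr ⟨hu, ?_⟩)))
    simp only [Finset.mem_singleton]
    exact fun h => hsu h.symm
  -- if u is not in W, then the coefficient of t₁' at u is b
  have hub : u ∉ W → coeff t₁' u = b := by
    intro huW
    rw [hW] at huW
    simp only [Finset.mem_union, Finset.mem_sdiff, Finset.mem_singleton, not_or, not_and,
      not_not] at huW
    have hus' : u ∉ domD s' := huW.1.1
    have huu' : u ∉ domD u' := huW.1.2
    have huD₂ : u ∉ D₂ := by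
      intro hh
      have := huW.2.2 (Or.inr hh)
      exact hsu this.symm
    have hctu : coeff t u = b := by
      rcases h2alt with h' | h'
      · exact absurd h' huD₂
      · exact h'
    rw [h1c u, hctu, coeff_of_not_mem s' u hus', if_neg hsu]
    ring
  refine step_intro b u u' (W ∩ domD t₁') hat2 huT₁ ?_ ?_ ?_ ?_ ?_
  · intro x hx
    rw [Finset.mem_sdiff] at hx
    refine Finset.mem_inter.mpr ⟨?_, hx.1⟩
    rw [hW]
    refine Finset.mem_union.mpr (Or.inr (Finset.mem_union.mpr (Or.inl ?_)))
    rw [Finset.mem_sdiff]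
    exact ⟨h1d ▸ hx.1, hx.2⟩
  · exact Finset.inter_subset_right
  · by_cases huW : u ∈ W
    · exact Or.inl (Finset.mem_inter.mpr ⟨huW, huT₁⟩)
    · exact Or.inr (hub huW)
  · intro x
    rw [hcoW x]
    by_cases hxW : x ∈ W
    · rw [if_pos hxW, hH, h1c x]
      try ring
    · rw [if_neg hxW]
      have hxu' : x ∉ domD u' := by
        intro hh
        exact hxW (hW ▸ Finset.mem_union.mpr (Or.inl (Finset.mem_union.mpr (Or.inr hh))))
      by_cases hxu : x = u
      · subst hxu
        rw [hub hxW, coeff_of_not_mem u' x hxu', if_pos rfl]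
        ring
      · have hxT₁ : x ∉ domD t₁' := by
          intro hh
          apply hxW
          rw [hW]
          refine Finset.mem_union.mpr (Or.inr (Finset.mem_union.mpr (Or.inl ?_)))
          rw [Finset.mem_sdiff]
          exact ⟨h1d ▸ hh, by simpa using hxu⟩
        rw [coeff_of_not_mem t₁' x hxT₁, coeff_of_not_mem u' x hxu',
          if_neg (fun hh : u = x => hxu hh.symm)]
        ring
  · rw [hdoW]
    apply Finset.Subset.antisymm
    · intro x hx
      by_cases hxu' : x ∈ domD u'
      · exact Finset.mem_union.mpr (Or.inl hxu')
      · refine Finset.mem_union.mpr (Or.inr (Finset.mem_inter.mpr ⟨hx, ?_⟩))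
        rw [h1d]
        rw [hW] at hx
        simp only [Finset.mem_union, Finset.mem_sdiff, Finset.mem_singleton] at hx
        rcases hx with (h' | h') | (h' | h')
        · exact Finset.mem_union.mpr (Or.inl h')
        · exact absurd h' hxu'
        · exact Finset.mem_union.mpr h'.1
        · rcases h'.1 with h'' | h''
          · exact absurd h'' hxu'
          · refine Finset.mem_union.mpr (Or.inr (hD₁ ?_))
            rw [Finset.mem_sdiff]
            exact ⟨hD₂' h'', by simpa using h'.2⟩
    · intro x hx
      rcases Finset.mem_union.mp hx with h' | h'
      · exact hW ▸ Finset.mem_union.mpr (Or.inl (Finset.mem_union.mpr (Or.inr h')))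
      · exact (Finset.mem_inter.mp h').1

end WeakDiamond


/-- Weak diamond property of one-step evaluation. -/
theorem weak_diamond {t t₁' t₂' : Distr} (h₁ : Step t t₁') (h₂ : Step t t₂') :
    Cong t₁' t₂' ∨ (Step t₁' t₂' ∨ Step t₂' t₁') ∨
      ∃ t'' : Distr, Step t₁' t'' ∧ Step t₂' t'' := by
  classical
  obtain ⟨a, s, s', D₁, hat1, hsT, hD₁, hD₁', h1alt, h1c, h1d⟩ := step_elim h₁
  obtain ⟨b, u, u', D₂, hat2, huT, hD₂, hD₂', h2alt, h2c, h2d⟩ := step_elim h₂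
  by_cases hsu : s = u
  · -- same redex
    subst hsu
    have hd : s' = u' := atom_det hat1 hat2
    subst hd
    by_cases hm1 : s ∈ domD t₁'
    · exact Or.inr (Or.inl (Or.inl
        (diamond_same hat1 hsT hD₁ hD₁' hD₂ hD₂' h2alt h1c h1d h2c h2d hm1)))
    · by_cases hm2 : s ∈ domD t₂'
      · exact Or.inr (Or.inl (Or.inr
          (diamond_same hat1 hsT hD₂ hD₂' hD₁ hD₁' h1alt h2c h2d h1c h1d hm2)))
      · left
        rw [h1d] at hm1
        rw [h2d] at hm2
        simp only [Finset.mem_union, not_or] at hm1 hm2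
        have ha : coeff t s = a := h1alt.resolve_left hm1.2
        have hb : coeff t s = b := h2alt.resolve_left hm2.2
        have hab : a = b := ha ▸ hb
        have hDeq : ∀ D : Finset Term, domD t \ {s} ⊆ D → D ⊆ domD t → s ∉ D →
            D = domD t \ {s} := by
          intro D hsub hsub' hns
          apply Finset.Subset.antisymm
          · intro x hx
            rw [Finset.mem_sdiff]
            refine ⟨hsub' hx, ?_⟩
            simp only [Finset.mem_singleton]
            intro hxs; subst hxs; exact hns hx
          · exact hsub
        apply cong_of_eq
        · intro x; rw [h1c x, h2c x, hab]
        · rw [h1d, h2d, hDeq D₁ hD₁ hD₁' hm1.2, hDeq D₂ hD₂ hD₂' hm2.2]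
  · -- distinct redexes
    right; right
    have hstep1 := diamond_diff hsu hat2 huT hD₁ hD₂' h2alt h1c h1d
    have hstep2 := diamond_diff (fun h => hsu h.symm) hat1 hsT hD₂ hD₁' h1alt h2c h2d
    have hfun : (fun x => coeff t x + b * (coeff u' x - if u = x then 1 else 0)
          + a * (coeff s' x - if s = x then 1 else 0))
        = (fun x => coeff t x + a * (coeff s' x - if s = x then 1 else 0)
          + b * (coeff u' x - if u = x then 1 else 0)) := by
      funext x; ring
    have hset : domD u' ∪ domD s' ∪ ((domD u' ∪ D₂) \ {s} ∪ (domD s' ∪ D₁) \ {u})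
        = domD s' ∪ domD u' ∪ ((domD s' ∪ D₁) \ {u} ∪ (domD u' ∪ D₂) \ {s}) := by
      rw [Finset.union_comm (domD u') (domD s'),
        Finset.union_comm ((domD u' ∪ D₂) \ {s}) ((domD s' ∪ D₁) \ {u})]
    rw [hfun, hset] at hstep2
    exact ⟨_, hstep1, hstep2⟩

end LinAlg
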